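/- arXiv:2509.00121 — 3 statements merged into one kernel-verified Lean document; each statement's English description precedes it below -/
import Mathlib

section
/- Let n be a positive integer and let a/b be a fraction in the Farey sequence of order n with 2 ≤ b ≤ n and 0 < a/b < 1. Let p/q and r/s be the fractions immediately preceding and immediately following a/b in the Farey sequence of order b. Then the fraction immediately preceding a/b in the Farey sequence of order n equals (p + da)/(q + db) with d = ⌊(n − q)/b⌋, and the fraction immediately following a/b in the Farey sequence of order n equals (r + d'a)/(s + d'b) with d' = ⌊(n − s)/b⌋. -/
/-- The Farey fractions of order `n`: the rationals in `[0,1]` whose (reduced) denominator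
is at most `n`. -/
def fareySet (n : ℕ) : Finset ℚ :=
  ((Finset.range (n + 1) ×ˢ Finset.range (n + 1)).image fun p => (p.1 : ℚ) / (p.2 : ℚ)).filter
    fun q => 0 ≤ q ∧ q ≤ 1 ∧ q.den ≤ n

/-- The Farey sequence of order `n`: the Farey fractions of order `n` listed in
increasing order. -/
def fareyList (n : ℕ) : List ℚ := (fareySet n).sort (· ≤ ·)

/-- Two reduced fractions `q = a/b` and `q' = a'/b'` are similarly ordered if
`(a' - a) * (b' - b) ≥ 0`. -/
def SimilarlyOrdered (q q' : ℚ) : Prop :=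
  0 ≤ (q'.num - q.num) * ((q'.den : ℤ) - (q.den : ℤ))


private lemma natAbs_cop {P Q : ℤ} (h : IsCoprime P Q) : Nat.Coprime P.natAbs Q.natAbs :=
  Int.isCoprime_iff_gcd_eq_one.mp h

private lemma rat_mk' {P : ℤ} {Q : ℕ} (hQ : 0 < Q) (hcop : IsCoprime P (Q : ℤ)) :
    ((P : ℚ) / (Q : ℚ)).num = P ∧ ((P : ℚ) / (Q : ℚ)).den = Q := by
  have hQ' : (0 : ℤ) < (Q : ℤ) := by exact_mod_cast hQ
  have h' : Nat.Coprime P.natAbs (Q : ℤ).natAbs := natAbs_cop hcop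
  have hcast : ((Q : ℤ) : ℚ) = (Q : ℚ) := by push_cast; ring
  constructor
  · rw [← hcast]; exact Rat.num_div_eq_of_coprime hQ' h'
  · rw [← hcast]
    have := Rat.den_div_eq_of_coprime hQ' h'
    exact_mod_cast this

private lemma mem_fareySet {n : ℕ} {y : ℚ} :
    y ∈ fareySet n ↔ 0 ≤ y ∧ y ≤ 1 ∧ y.den ≤ n := by
  unfold fareySet
  rw [Finset.mem_filter]
  constructor
  · rintro ⟨-, h⟩; exact h
  · rintro ⟨h0, h1, hd⟩
    have hnum : 0 ≤ y.num := Rat.num_nonneg.mpr h0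
    have h2 : y.num ≤ (y.den : ℤ) := by
      have := (Rat.le_iff _ _).mp h1
      simpa using this
    refine ⟨Finset.mem_image.mpr ⟨(y.num.toNat, y.den), ?_, ?_⟩, h0, h1, hd⟩
    · rw [Finset.mem_product, Finset.mem_range, Finset.mem_range]
      constructor <;> omega
    · show ((y.num.toNat : ℕ) : ℚ) / ((y.den : ℕ) : ℚ) = y
      have : ((y.num.toNat : ℕ) : ℚ) = ((y.num : ℤ) : ℚ) := by
        exact_mod_cast congrArg (fun z : ℤ => (z : ℚ)) (Int.toNat_of_nonneg hnum)
      rw [this]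
      exact Rat.num_div_den y

private lemma one_le_cross {α β : ℚ} (h : α < β) :
    1 ≤ β.num * (α.den : ℤ) - α.num * (β.den : ℤ) := by
  have := (Rat.lt_iff _ _).mp h
  omega

private lemma det_lt {q w : ℚ} (h : q.num * (w.den : ℤ) - w.num * (q.den : ℤ) = 1) : w < q := by
  rw [Rat.lt_iff]
  omega

private lemma between_den {α γ β : ℚ} (h1 : α < γ) (h2 : γ < β)
    (hadj : β.num * (α.den : ℤ) - α.num * (β.den : ℤ) = 1) : α.den + β.den ≤ γ.den := by
  have g1 := one_le_cross h1
  have g2 := one_le_cross h2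
  have dα : (0 : ℤ) < (α.den : ℤ) := by exact_mod_cast α.pos
  have dβ : (0 : ℤ) < (β.den : ℤ) := by exact_mod_cast β.pos
  have key : (γ.den : ℤ) = (β.den : ℤ) * (γ.num * α.den - α.num * γ.den)
      + (α.den : ℤ) * (β.num * γ.den - γ.num * β.den) := by
    linear_combination (-(γ.den : ℤ)) * hadj
  have : (α.den : ℤ) + (β.den : ℤ) ≤ (γ.den : ℤ) := by nlinarith
  exact_mod_cast this

private lemma isGreatest_core {n : ℕ} {q w : ℚ} (h0 : 0 ≤ w) (hwn : w.den ≤ n)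
    (hdet : q.num * (w.den : ℤ) - w.num * (q.den : ℤ) = 1) (hq1 : q ≤ 1)
    (hmax : n < w.den + q.den) :
    IsGreatest {y : ℚ | y ∈ fareySet n ∧ y < q} w := by
  have hwq : w < q := det_lt hdet
  constructor
  · exact ⟨mem_fareySet.mpr ⟨h0, le_trans hwq.le hq1, hwn⟩, hwq⟩
  · rintro y ⟨hy, hyq⟩
    by_contra hlt
    push_neg at hlt
    have hb := between_den hlt hyq hdet
    have hyd := (mem_fareySet.mp hy).2.2
    omega

private lemma isLeast_core {n : ℕ} {q w : ℚ} (h1 : w ≤ 1) (hwn : w.den ≤ n)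
    (hdet : w.num * (q.den : ℤ) - q.num * (w.den : ℤ) = 1) (hq0 : 0 ≤ q)
    (hmax : n < w.den + q.den) :
    IsLeast {y : ℚ | y ∈ fareySet n ∧ q < y} w := by
  have hwq : q < w := det_lt hdet
  constructor
  · exact ⟨mem_fareySet.mpr ⟨le_trans hq0 hwq.le, h1, hwn⟩, hwq⟩
  · rintro y ⟨hy, hyq⟩
    by_contra hlt
    push_neg at hlt
    have hb := between_den hyq hlt hdet
    have hyd := (mem_fareySet.mp hy).2.2
    omega

private lemma one_sub_num_den (y : ℚ) :
    (1 - y).num = (y.den : ℤ) - y.num ∧ (1 - y).den = y.den := by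
  have hd : 0 < y.den := y.pos
  have hd' : ((y.den : ℤ) : ℚ) ≠ 0 := by
    exact_mod_cast (Nat.cast_ne_zero (R := ℚ)).mpr hd.ne'
  have hcopnum : IsCoprime y.num (y.den : ℤ) := by
    rw [Int.isCoprime_iff_gcd_eq_one]
    exact y.reduced
  have hcop : IsCoprime ((y.den : ℤ) - y.num) (y.den : ℤ) := by
    have := (hcopnum.neg_left).add_mul_left_left 1
    simpa [neg_add_eq_sub] using this
  have heq : 1 - y = (((y.den : ℤ) - y.num : ℤ) : ℚ) / ((y.den : ℕ) : ℚ) := by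
    have h1 : (y : ℚ) * ((y.den : ℕ) : ℚ) = (y.num : ℚ) := Rat.mul_den_eq_num y
    rw [eq_div_iff (by exact_mod_cast (Nat.cast_ne_zero (R := ℚ)).mpr hd.ne')]
    push_cast
    linear_combination -h1
  rw [heq]
  exact rat_mk' hd hcop

private lemma pred_det {q u : ℚ} (hden : 2 ≤ q.den) (h0 : 0 < q) (h1 : q < 1)
    (hu : IsGreatest {y : ℚ | y ∈ fareySet q.den ∧ y < q} u) :
    q.num * (u.den : ℤ) - u.num * (q.den : ℤ) = 1 := by
  set a := q.num with ha'
  set b := (q.den : ℤ) with hb'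
  have hb : 2 ≤ b := by rw [hb']; exact_mod_cast hden
  have ha : 1 ≤ a := Rat.num_pos.mpr h0
  have hab : a < b := by exact_mod_cast Rat.lt_one_iff_num_lt_denom.mpr h1
  -- Bezout
  have hcop : IsCoprime a b := by
    rw [Int.isCoprime_iff_gcd_eq_one]; exact q.reduced
  obtain ⟨c, d, hcd⟩ := hcop
  -- x := (c) % b ; relation a * x - b * y = 1
  set x := c % b with hx'
  set y := -d - a * (c / b) with hy'
  have hbne : b ≠ 0 := by omega
  have hxy : a * x - b * y = 1 := by
    have hmod : c % b = c - b * (c / b) := Int.emod_def c b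
    rw [hx', hy', hmod]
    linear_combination hcd
  have hx0 : 0 ≤ x := Int.emod_nonneg c hbne
  have hxb : x < b := Int.emod_lt_of_pos c (by omega)
  have hx1 : 1 ≤ x := by
    rcases lt_or_ge 0 x with h | h
    · omega
    · exfalso
      have hxeq : x = 0 := le_antisymm h hx0
      rw [hxeq] at hxy
      have : b ∣ 1 := ⟨-y, by linarith⟩
      have := Int.le_of_dvd one_pos this
      omega
  have hy0 : 0 ≤ y := by nlinarith
  have hyx : y < x := by nlinarith
  -- the fraction y / x
  have hxnat : x = ((x.toNat : ℕ) : ℤ) := (Int.toNat_of_nonneg hx0).symm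
  have hxnatpos : 0 < x.toNat := by omega
  have hcopyx : IsCoprime y ((x.toNat : ℕ) : ℤ) := by
    rw [← hxnat]
    exact ⟨-b, a, by linarith⟩
  set w : ℚ := (y : ℚ) / ((x.toNat : ℕ) : ℚ) with hw'
  obtain ⟨hwnum, hwden⟩ := rat_mk' hxnatpos hcopyx
  have hwden' : (w.den : ℤ) = x := by rw [hwden, ← hxnat]
  have hdetw : a * (w.den : ℤ) - w.num * b = 1 := by
    rw [hwden', hwnum]; linarith
  have hwq : w < q := det_lt hdetw
  have hwmem : w ∈ fareySet q.den := by
    refine mem_fareySet.mpr ⟨?_, ?_, ?_⟩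
    · apply div_nonneg
      · exact_mod_cast hy0
      · positivity
    · rw [div_le_one (by positivity)]
      have : (y : ℚ) ≤ ((x.toNat : ℕ) : ℤ) := by rw [← hxnat]; exact_mod_cast hyx.le
      exact_mod_cast this
    · have : (w.den : ℤ) < b := by rw [hwden']; exact hxb
      rw [hb'] at this
      exact_mod_cast this.le
  have hwu : w ≤ u := hu.2 ⟨hwmem, hwq⟩
  have huq : u < q := hu.1.2
  have hud : u.den ≤ q.den := (mem_fareySet.mp hu.1.1).2.2
  rcases eq_or_lt_of_le hwu with heq | hlt
  · rw [← heq, hwden', hwnum]; linarith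
  · exfalso
    have := between_den hlt huq hdetw
    have hwd1 : 1 ≤ w.den := w.pos
    omega

private lemma succ_det {q v : ℚ} (hden : 2 ≤ q.den) (h0 : 0 < q) (h1 : q < 1)
    (hv : IsLeast {y : ℚ | y ∈ fareySet q.den ∧ q < y} v) :
    v.num * (q.den : ℤ) - q.num * (v.den : ℤ) = 1 := by
  obtain ⟨hn1, hd1⟩ := one_sub_num_den q
  have hg : IsGreatest {y : ℚ | y ∈ fareySet (1 - q).den ∧ y < 1 - q} (1 - v) := by
    rw [hd1]
    constructor
    · obtain ⟨⟨hm, hlt⟩, -⟩ := hv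
      obtain ⟨v0, v1, vd⟩ := mem_fareySet.mp hm
      exact ⟨mem_fareySet.mpr ⟨by linarith, by linarith,
        by rw [(one_sub_num_den v).2]; exact vd⟩, by linarith⟩
    · rintro z ⟨hz, hzq⟩
      obtain ⟨z0, z1, zd⟩ := mem_fareySet.mp hz
      have hq1z : q < 1 - z := by linarith
      have hmem : 1 - z ∈ fareySet q.den := mem_fareySet.mpr
        ⟨by linarith, by linarith, by rw [(one_sub_num_den z).2]; exact zd⟩
      have := hv.2 ⟨hmem, hq1z⟩
      linarith
  have hkey := pred_det (by rw [hd1]; exact hden) (by linarith) (by linarith) hg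
  obtain ⟨vn, vd2⟩ := one_sub_num_den v
  rw [hn1, hd1, vn, vd2] at hkey
  linear_combination hkey

private lemma greatest_side (n : ℕ) (q u : ℚ) (hqn : q.den ≤ n) (hq0 : 0 ≤ q) (hq1 : q ≤ 1)
    (hu0 : 0 ≤ u) (hud : u.den ≤ q.den)
    (hdet : q.num * (u.den : ℤ) - u.num * (q.den : ℤ) = 1) :
    IsGreatest {y : ℚ | y ∈ fareySet n ∧ y < q}
      (((u.num + (((n - u.den) / q.den : ℕ) : ℤ) * q.num : ℤ) : ℚ) /
        (((u.den + ((n - u.den) / q.den) * q.den : ℕ) : ℚ))) := by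
  have hb : 0 < q.den := q.pos
  have hu1 : 0 < u.den := u.pos
  set d := (n - u.den) / q.den with hd
  set P : ℤ := u.num + (d : ℤ) * q.num with hP
  set Q : ℕ := u.den + d * q.den with hQ
  have hQpos : 0 < Q := by omega
  have hdet2 : q.num * (Q : ℤ) - P * (q.den : ℤ) = 1 := by
    rw [hP, hQ]; push_cast; linear_combination hdet
  have hcop : IsCoprime P (Q : ℤ) := ⟨-(q.den : ℤ), q.num, by linear_combination hdet2⟩
  obtain ⟨hwnum, hwden⟩ := rat_mk' hQpos hcop
  apply isGreatest_core
  · apply div_nonneg _ (by positivity)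
    have h1 : 0 ≤ u.num := Rat.num_nonneg.mpr hu0
    have h2 : 0 ≤ q.num := Rat.num_nonneg.mpr hq0
    have : 0 ≤ P := by rw [hP]; positivity
    exact_mod_cast this
  · rw [hwden]
    have h3 : d * q.den ≤ n - u.den := hd ▸ Nat.div_mul_le_self _ _
    omega
  · rw [hwnum, hwden]; exact hdet2
  · exact hq1
  · rw [hwden]
    have h4 : d * q.den + (n - u.den) % q.den = n - u.den := by
      rw [hd, Nat.mul_comm]; exact Nat.div_add_mod _ _
    have h5 := Nat.mod_lt (n - u.den) hb
    omega

private lemma least_side (n : ℕ) (q v : ℚ) (hqn : q.den ≤ n) (hq0 : 0 ≤ q) (hq1 : q ≤ 1)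
    (hv1 : v ≤ 1) (hvd : v.den ≤ q.den)
    (hdet : v.num * (q.den : ℤ) - q.num * (v.den : ℤ) = 1) :
    IsLeast {y : ℚ | y ∈ fareySet n ∧ q < y}
      (((v.num + (((n - v.den) / q.den : ℕ) : ℤ) * q.num : ℤ) : ℚ) /
        (((v.den + ((n - v.den) / q.den) * q.den : ℕ) : ℚ))) := by
  have hb : 0 < q.den := q.pos
  have hv1' : 0 < v.den := v.pos
  set d := (n - v.den) / q.den with hd
  set P : ℤ := v.num + (d : ℤ) * q.num with hP
  set Q : ℕ := v.den + d * q.den with hQ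
  have hQpos : 0 < Q := by omega
  have hdet2 : P * (q.den : ℤ) - q.num * (Q : ℤ) = 1 := by
    rw [hP, hQ]; push_cast; linear_combination hdet
  have hcop : IsCoprime P (Q : ℤ) := ⟨(q.den : ℤ), -q.num, by linear_combination hdet2⟩
  obtain ⟨hwnum, hwden⟩ := rat_mk' hQpos hcop
  apply isLeast_core
  · rw [div_le_one (by exact_mod_cast hQpos)]
    have h1 : v.num ≤ (v.den : ℤ) := by simpa using (Rat.le_iff _ _).mp hv1
    have h2 : q.num ≤ (q.den : ℤ) := by simpa using (Rat.le_iff _ _).mp hq1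
    have hd0 : (0 : ℤ) ≤ (d : ℤ) := by positivity
    have : P ≤ (Q : ℤ) := by
      rw [hP, hQ]; push_cast
      nlinarith
    exact_mod_cast this
  · rw [hwden]
    have h3 : d * q.den ≤ n - v.den := hd ▸ Nat.div_mul_le_self _ _
    omega
  · rw [hwnum, hwden]; exact hdet2
  · exact hq0
  · rw [hwden]
    have h4 : d * q.den + (n - v.den) % q.den = n - v.den := by
      rw [hd, Nat.mul_comm]; exact Nat.div_add_mod _ _
    have h5 := Nat.mod_lt (n - v.den) hb
    omega


/-- Let `a/b` be a fraction in the Farey sequence of order `n` with `2 ≤ b` and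
`0 < a/b < 1`, and let `p/q` (`= u`) and `r/s` (`= v`) be the fractions immediately
preceding and following `a/b` in the Farey sequence of order `b`. Then the fraction
immediately preceding `a/b` in the Farey sequence of order `n` is
`(p + da)/(q + db)` with `d = ⌊(n − q)/b⌋`, and the fraction immediately following it is
`(r + d'a)/(s + d'b)` with `d' = ⌊(n − s)/b⌋`. -/
theorem farey_neighbors_formula (n : ℕ) (hn : 1 ≤ n) (q : ℚ) (hq : q ∈ fareySet n)
    (hden : 2 ≤ q.den) (h0 : 0 < q) (h1 : q < 1) (u v : ℚ)
    (hu : IsGreatest {y : ℚ | y ∈ fareySet q.den ∧ y < q} u)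
    (hv : IsLeast {y : ℚ | y ∈ fareySet q.den ∧ q < y} v) :
    IsGreatest {y : ℚ | y ∈ fareySet n ∧ y < q}
      (((u.num + (((n - u.den) / q.den : ℕ) : ℤ) * q.num : ℤ) : ℚ) /
        (((u.den + ((n - u.den) / q.den) * q.den : ℕ) : ℚ))) ∧
    IsLeast {y : ℚ | y ∈ fareySet n ∧ q < y}
      (((v.num + (((n - v.den) / q.den : ℕ) : ℤ) * q.num : ℤ) : ℚ) /
        (((v.den + ((n - v.den) / q.den) * q.den : ℕ) : ℚ))) := by
  obtain ⟨hq0, hq1, hqn⟩ := mem_fareySet.mp hq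
  obtain ⟨hu0, -, hud⟩ := mem_fareySet.mp hu.1.1
  obtain ⟨-, hv1, hvd⟩ := mem_fareySet.mp hv.1.1
  exact ⟨greatest_side n q u hqn hq0 hq1 hu0 hud (pred_det hden h0 h1 hu),
    least_side n q v hqn hq0 hq1 hv1 hvd (succ_det hden h0 h1 hv)⟩
end

section
/- Let n be a positive integer and let a_k/b_k and a_l/b_l, with indices k < l, be fractions in the Farey sequence of order n that are not similarly ordered, i.e. (a_l − a_k)(b_l − b_k) < 0. Then a_l ≥ a_k + 1, b_l ≤ b_k − 1, and a_l/b_l − a_k/b_k ≥ (a_k + b_k)/(b_k(b_k − 1)) > 1/n. -/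
/-- Auxiliary arithmetic lemma: the quantitative gap estimate. -/
lemma farey_gap_aux (n : ℕ) (hn : 1 ≤ n) (a b a' b' : ℤ)
    (ha0 : 0 ≤ a) (hb'1 : 1 ≤ b') (hbn : b ≤ (n : ℤ))
    (ha' : a + 1 ≤ a') (hb' : b' ≤ b - 1) :
    ((a : ℚ) + (b : ℚ)) / ((b : ℚ) * ((b : ℚ) - 1)) ≤ (a' : ℚ) / (b' : ℚ) - (a : ℚ) / (b : ℚ) ∧
    1 / (n : ℚ) < ((a : ℚ) + (b : ℚ)) / ((b : ℚ) * ((b : ℚ) - 1)) := by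
  have hb2 : (2 : ℤ) ≤ b := by omega
  have hA : (0 : ℚ) ≤ (a : ℚ) := by exact_mod_cast ha0
  have hB : (2 : ℚ) ≤ (b : ℚ) := by exact_mod_cast hb2
  have hB' : (1 : ℚ) ≤ (b' : ℚ) := by exact_mod_cast hb'1
  have hBn : (b : ℚ) ≤ (n : ℚ) := by exact_mod_cast hbn
  have hA' : (a : ℚ) + 1 ≤ (a' : ℚ) := by exact_mod_cast ha'
  have hB'B : (b' : ℚ) ≤ (b : ℚ) - 1 := by exact_mod_cast hb'
  have hNpos : (0 : ℚ) < (n : ℚ) := by exact_mod_cast hn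
  have hBpos : (0 : ℚ) < (b : ℚ) := by linarith
  have hBm1 : (0 : ℚ) < (b : ℚ) - 1 := by linarith
  have hB'pos : (0 : ℚ) < (b' : ℚ) := by linarith
  constructor
  · have h1 : ((a : ℚ) + 1) / ((b : ℚ) - 1) ≤ (a' : ℚ) / (b' : ℚ) :=
      div_le_div₀ (by linarith) hA' hB'pos hB'B
    have h2 : ((a : ℚ) + (b : ℚ)) / ((b : ℚ) * ((b : ℚ) - 1)) =
        ((a : ℚ) + 1) / ((b : ℚ) - 1) - (a : ℚ) / (b : ℚ) := by
      field_simp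
      ring
    rw [h2]
    linarith
  · rw [div_lt_div_iff₀ hNpos (by nlinarith)]
    nlinarith

/-- If `a_k/b_k` and `a_l/b_l` (with `k < l`) are fractions in the Farey sequence of order
`n` that are not similarly ordered, then `a_l ≥ a_k + 1`, `b_l ≤ b_k − 1`, and
`a_l/b_l − a_k/b_k ≥ (a_k + b_k)/(b_k(b_k − 1)) > 1/n`. -/
theorem farey_not_similarly_ordered_gap (n : ℕ) (hn : 1 ≤ n)
    (k l : Fin (fareyList n).length) (hkl : k < l)
    (h : (((fareyList n).get l).num - ((fareyList n).get k).num) *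
        ((((fareyList n).get l).den : ℤ) - (((fareyList n).get k).den : ℤ)) < 0) :
    ((fareyList n).get k).num + 1 ≤ ((fareyList n).get l).num ∧
    ((((fareyList n).get l).den : ℤ)) ≤ ((((fareyList n).get k).den : ℤ)) - 1 ∧
    (((((fareyList n).get k).num : ℚ)) + ((((fareyList n).get k).den : ℚ))) /
        (((((fareyList n).get k).den : ℚ)) * (((((fareyList n).get k).den : ℚ)) - 1)) ≤
      (fareyList n).get l - (fareyList n).get k ∧
    1 / (n : ℚ) < (((((fareyList n).get k).num : ℚ)) + ((((fareyList n).get k).den : ℚ))) /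
        (((((fareyList n).get k).den : ℚ)) * (((((fareyList n).get k).den : ℚ)) - 1)) := by
  have hsorted : (fareyList n).SortedLT := Finset.sortedLT_sort _
  have hlt : (fareyList n).get k < (fareyList n).get l := hsorted.strictMono_get hkl
  have hmemk : (fareyList n).get k ∈ fareySet n := by
    rw [← Finset.mem_sort (α := ℚ) (· ≤ ·)]; exact (fareyList n).get_mem _
  have hmeml : (fareyList n).get l ∈ fareySet n := by
    rw [← Finset.mem_sort (α := ℚ) (· ≤ ·)]; exact (fareyList n).get_mem _
  obtain ⟨-, hq0, -, hqd⟩ := Finset.mem_filter.mp hmemk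
  obtain ⟨-, hq'0, -, hq'd⟩ := Finset.mem_filter.mp hmeml
  have ha0 : 0 ≤ ((fareyList n).get k).num := Rat.num_nonneg.mpr hq0
  have hb1 : (1 : ℤ) ≤ (((fareyList n).get k).den : ℤ) := by
    exact_mod_cast ((fareyList n).get k).den_pos
  have hb'1 : (1 : ℤ) ≤ (((fareyList n).get l).den : ℤ) := by
    exact_mod_cast ((fareyList n).get l).den_pos
  have hbn : (((fareyList n).get k).den : ℤ) ≤ (n : ℤ) := by exact_mod_cast hqd
  -- cross multiplication from q < q'
  have hcross : ((fareyList n).get k).num * (((fareyList n).get l).den : ℤ) <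
      ((fareyList n).get l).num * (((fareyList n).get k).den : ℤ) := by
    have hBpos : (0 : ℚ) < (((fareyList n).get k).den : ℚ) := by
      exact_mod_cast ((fareyList n).get k).den_pos
    have hB'pos : (0 : ℚ) < (((fareyList n).get l).den : ℚ) := by
      exact_mod_cast ((fareyList n).get l).den_pos
    rw [← Rat.num_div_den ((fareyList n).get k), ← Rat.num_div_den ((fareyList n).get l),
      div_lt_div_iff₀ hBpos hB'pos] at hlt
    exact_mod_cast hlt
  have key : ((fareyList n).get k).num + 1 ≤ ((fareyList n).get l).num ∧
      (((fareyList n).get l).den : ℤ) ≤ (((fareyList n).get k).den : ℤ) - 1 := by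
    rcases mul_neg_iff.mp h with ⟨h1, h2⟩ | ⟨h1, h2⟩
    · constructor <;> omega
    · exfalso; nlinarith
  obtain ⟨ha', hb'⟩ := key
  obtain ⟨H1, H2⟩ := farey_gap_aux n hn ((fareyList n).get k).num
    (((fareyList n).get k).den : ℤ) ((fareyList n).get l).num
    (((fareyList n).get l).den : ℤ) ha0 hb'1 hbn ha' hb'
  push_cast at H1 H2
  rw [Rat.num_div_den, Rat.num_div_den] at H1
  exact ⟨ha', hb', H1, H2⟩
end

section
/- Let n be a positive integer and let a_k/b_k and a_l/b_l, with indices k < l, be fractions in the Farey sequence of order n that are not similarly ordered, i.e. (a_l − a_k)(b_l − b_k) < 0. If moreover a_k/b_k ≥ 1/2, then a_l/b_l − a_k/b_k ≥ 3/(2(b_k − 1)). -/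
/-- If `a_k/b_k` and `a_l/b_l` (with `k < l`) are fractions in the Farey sequence of order
`n` that are not similarly ordered, and moreover `a_k/b_k ≥ 1/2`, then
`a_l/b_l − a_k/b_k ≥ 3/(2(b_k − 1))`. -/
theorem farey_not_similarly_ordered_gap_of_half_le (n : ℕ) (hn : 1 ≤ n)
    (k l : Fin (fareyList n).length) (hkl : k < l)
    (h : (((fareyList n).get l).num - ((fareyList n).get k).num) *
        ((((fareyList n).get l).den : ℤ) - (((fareyList n).get k).den : ℤ)) < 0)
    (hhalf : (1 : ℚ) / 2 ≤ (fareyList n).get k) :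
    3 / (2 * (((((fareyList n).get k).den : ℚ)) - 1)) ≤
      (fareyList n).get l - (fareyList n).get k := by
  have hsorted : ((fareySet n).sort (· ≤ ·)).SortedLT := Finset.sortedLT_sort _
  set q := (fareyList n).get k with hq
  set q' := (fareyList n).get l with hq'
  have hlt : q < q' := hsorted.strictMono_get hkl
  -- notation for numerators and denominators
  set a := q.num with ha
  set a' := q'.num with ha'
  have hbpos : 0 < (q.den : ℤ) := by exact_mod_cast q.pos
  have hb'pos : 0 < (q'.den : ℤ) := by exact_mod_cast q'.pos
  -- q ≥ 0, so a ≥ 0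
  have hq0 : (0 : ℚ) ≤ q := le_trans (by norm_num) hhalf
  have hanneg : 0 ≤ a := Rat.num_nonneg.mpr hq0
  -- 1/2 ≤ q gives den ≤ 2 * num
  have hden2 : (q.den : ℤ) ≤ 2 * a := by
    rw [← Rat.num_div_den q] at hhalf
    rw [div_le_div_iff₀ (by norm_num) (by exact_mod_cast q.pos)] at hhalf
    have : (q.den : ℚ) ≤ 2 * (q.num : ℚ) := by linarith
    exact_mod_cast this
  -- q < q' gives a * b' < a' * b
  have hcross : a * (q'.den : ℤ) < a' * (q.den : ℤ) := by
    rw [Rat.lt_iff] at hlt; exact hlt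
  -- case analysis on the sign condition
  rcases mul_neg_iff.mp h with ⟨hpos, hneg⟩ | ⟨hneg, hpos⟩
  · -- a' > a and b' < b : the real case
    have haa : a + 1 ≤ a' := by linarith [hpos]
    have hbb : (q'.den : ℤ) ≤ (q.den : ℤ) - 1 := by linarith [hneg]
    have hb2 : (2 : ℤ) ≤ (q.den : ℤ) := by linarith
    -- express the difference
    have hbQ : (0 : ℚ) < (q.den : ℚ) := by exact_mod_cast hbpos
    have hb'Q : (0 : ℚ) < (q'.den : ℚ) := by exact_mod_cast hb'pos
    have hb1Q : (0 : ℚ) < 2 * ((q.den : ℚ) - 1) := by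
      have : (2 : ℚ) ≤ (q.den : ℚ) := by exact_mod_cast hb2
      linarith
    have e : q' - q = ((a' * (q.den : ℤ) - a * (q'.den : ℤ) : ℤ) : ℚ) /
        ((q.den : ℚ) * (q'.den : ℚ)) := by
      rw [eq_div_iff (by positivity)]
      push_cast
      nth_rewrite 1 [← Rat.num_div_den q', ← Rat.num_div_den q]
      field_simp
      ring
    rw [e, div_le_div_iff₀ hb1Q (by positivity)]
    push_cast
    have haa' : (a : ℚ) + 1 ≤ (a' : ℚ) := by exact_mod_cast haa
    have hbb' : ((q'.den : ℤ) : ℚ) ≤ ((q.den : ℤ) : ℚ) - 1 := by exact_mod_cast hbb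
    have hb2' : (2 : ℚ) ≤ ((q.den : ℤ) : ℚ) := by exact_mod_cast hb2
    have hden2' : ((q.den : ℤ) : ℚ) ≤ 2 * (a : ℚ) := by exact_mod_cast hden2
    have hanneg' : (0 : ℚ) ≤ (a : ℚ) := by exact_mod_cast hanneg
    have hb'Q1 : (1 : ℚ) ≤ ((q'.den : ℤ) : ℚ) := by exact_mod_cast hb'pos
    push_cast at haa' hbb' hb2' hden2' hanneg' hb'Q1 ⊢
    nlinarith [mul_le_mul_of_nonneg_right hbb' (le_of_lt hbQ),
      mul_le_mul_of_nonneg_right haa' (le_of_lt hbQ),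
      mul_le_mul_of_nonneg_left hbb' hanneg',
      mul_nonneg (sub_nonneg.mpr hb2') (sub_nonneg.mpr hb'Q1)]
  · -- a' < a and b' > b : contradicts q < q'
    exfalso
    have haa : a' ≤ a - 1 := by linarith [hneg]
    have hbb : (q.den : ℤ) + 1 ≤ (q'.den : ℤ) := by linarith [hpos]
    nlinarith [mul_le_mul_of_nonneg_right haa (le_of_lt hbpos),
      mul_le_mul_of_nonneg_left hbb hanneg]
end
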